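/- Let ρ be a permutation of {1,…,n} with 321-height vector (h_1,…,h_n). Suppose the path ψ_{(3,2,1)}(ρ) has its first jump at position i, of depth d ≥ 1, followed immediately by a maximal run of l ≥ 1 consecutive down-steps; that is: h_q ≤ h_{q+1} + 1 for all q < i, d = h_i − h_{i+1} − 1 ≥ 1, h_{i+j+1} = h_{i+j} − 1 for 1 ≤ j ≤ l−1, and either i+l = n or h_{i+l+1} ≠ h_{i+l} − 1. Let i_1 < i_2 < … < i_r ≤ i be the positions of all left-to-right maxima of ρ that are weakly to the left of the jump, and for 1 ≤ g ≤ r set H_g = #{k : i_g < k ≤ n, ρ_k < ρ_{i_g}} and s_g = #{p : i_g < p ≤ i, ρ_p is not a left-to-right maximum}. Let K = {k : i < k ≤ n, ρ_k < ρ_{i+1}}, so |K| = d. Then the number of occurrences (a,b,c) of the pattern (3,2,1) in ρ with a = i_g for some g, i < b ≤ i+l, and c ∈ K equals d · Σ_{g=1}^{r} max(0, min(H_g − d − s_g, l)). -/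

import Mathlib

open scoped Classical

/-- An entry `ρ i` is a left-to-right maximum if it is greater than all entries to its left. -/
def IsLRMax {n : ℕ} (ρ : Equiv.Perm (Fin n)) (i : Fin n) : Prop :=
  ∀ j, j < i → ρ j < ρ i

/-- `m` is the last left-to-right maximum of `ρ` strictly before position `i`. -/
def IsLastLRMaxBefore {n : ℕ} (ρ : Equiv.Perm (Fin n)) (m i : Fin n) : Prop :=
  m < i ∧ IsLRMax ρ m ∧ ∀ p, m < p → p < i → ¬ IsLRMax ρ p

/-- The 321-height of entry `i` of `ρ`:  if `ρ i` is a left-to-right maximum, the number of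
entries to the right of `i` that are smaller than `ρ i`; otherwise the number of entries
`ρ k` to the right of `i` with `ρ i < ρ k < ρ m`, where `ρ m` is the last left-to-right
maximum before position `i`. -/
noncomputable def height321 {n : ℕ} (ρ : Equiv.Perm (Fin n)) (i : Fin n) : ℕ :=
  if IsLRMax ρ i then
    (Finset.univ.filter (fun k => i < k ∧ ρ k < ρ i)).card
  else
    (Finset.univ.filter (fun k => i < k ∧ ρ i < ρ k ∧
      ∃ m, IsLastLRMaxBefore ρ m i ∧ ρ k < ρ m)).card

section Helpers
open Finset

variable {n : ℕ} (ρ : Equiv.Perm (Fin n))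

lemma exists_last {p : Fin n} (hp : ¬ IsLRMax ρ p) :
    ∃ m, IsLastLRMaxBefore ρ m p := by
  have h0 : (0:ℕ) < n := p.pos
  have hz : IsLRMax ρ ⟨0, h0⟩ := by
    intro j hj
    rw [Fin.lt_def] at hj
    simp at hj
  have hzp : (⟨0, h0⟩ : Fin n) < p := by
    rw [Fin.lt_def]
    have h0' : ((⟨0, h0⟩ : Fin n) : ℕ) = 0 := rfl
    rcases Nat.eq_zero_or_pos (p : ℕ) with h | h
    · exact absurd (show (⟨0,h0⟩ : Fin n) = p from Fin.ext (by omega)) (by rintro rfl; exact hp hz)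
    · exact h
  classical
  set s := univ.filter (fun m => m < p ∧ IsLRMax ρ m) with hs
  have hne : s.Nonempty := ⟨⟨0, h0⟩, by simp [hs, hzp, hz]⟩
  refine ⟨s.max' hne, ?_, ?_, ?_⟩
  · exact ((mem_filter.mp (s.max'_mem hne)).2).1
  · exact ((mem_filter.mp (s.max'_mem hne)).2).2
  · intro q hq hqp hqmax
    have : q ∈ s := by simp [hs, hqp, hqmax]
    exact absurd hq (not_lt.mpr (s.le_max' q this))

lemma last_unique {m m' p : Fin n} (h1 : IsLastLRMaxBefore ρ m p)
    (h2 : IsLastLRMaxBefore ρ m' p) : m = m' := by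
  rcases lt_trichotomy m m' with h | h | h
  · exact absurd h2.2.1 (h1.2.2 m' h h2.1)
  · exact h
  · exact absurd h1.2.1 (h2.2.2 m h h1.1)

lemma le_last {m p : Fin n} (hm : IsLastLRMaxBefore ρ m p) :
    ∀ j, j < p → ρ j ≤ ρ m := by
  suffices H : ∀ N, ∀ j : Fin n, (j : ℕ) = N → j < p → ρ j ≤ ρ m by
    intro j hj; exact H (j : ℕ) j rfl hj
  intro N
  induction N using Nat.strong_induction_on with
  | _ N ih =>
    rintro j rfl hjp
    rcases lt_trichotomy j m with h | h | h
    · exact le_of_lt (hm.2.1 j h)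
    · exact le_of_eq (by rw [h])
    · have hj : ¬ IsLRMax ρ j := hm.2.2 j h hjp
      simp only [IsLRMax, not_forall] at hj
      obtain ⟨j', hj', hval⟩ := hj
      exact le_trans (not_lt.mp hval)
        (ih (j' : ℕ) (Fin.lt_def.mp hj') j' rfl (lt_trans hj' hjp))

lemma lt_last {m p : Fin n} (hm : IsLastLRMaxBefore ρ m p) (hp : ¬ IsLRMax ρ p) :
    ρ p < ρ m := by
  simp only [IsLRMax, not_forall] at hp
  obtain ⟨j, hj, hval⟩ := hp
  have h1 : ρ p ≤ ρ j := not_lt.mp hval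
  have h2 : ρ j ≤ ρ m := le_last ρ hm j hj
  have hne : ρ p ≠ ρ m := fun h => (ne_of_lt hm.1).symm (ρ.injective h)
  exact lt_of_le_of_ne (le_trans h1 h2) hne

lemma height_eq_lr {p : Fin n} (hp : IsLRMax ρ p) :
    height321 ρ p = (univ.filter (fun k => p < k ∧ ρ k < ρ p)).card := by
  rw [height321, if_pos hp]

lemma height_eq_nonlr {m p : Fin n} (hp : ¬ IsLRMax ρ p)
    (hm : IsLastLRMaxBefore ρ m p) :
    height321 ρ p = (univ.filter (fun k => p < k ∧ ρ p < ρ k ∧ ρ k < ρ m)).card := by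
  rw [height321, if_neg hp]
  congr 1
  apply filter_congr
  intro k _
  constructor
  · rintro ⟨h1, h2, m', hm', h3⟩
    exact ⟨h1, h2, by rwa [last_unique ρ hm' hm] at h3⟩
  · rintro ⟨h1, h2, h3⟩
    exact ⟨h1, h2, m, hm, h3⟩

lemma last_succ {q p m : Fin n} (hqp : (p : ℕ) = (q : ℕ) + 1)
    (hq : ¬ IsLRMax ρ q) (hm : IsLastLRMaxBefore ρ m q) :
    IsLastLRMaxBefore ρ m p := by
  refine ⟨lt_trans hm.1 (Fin.lt_def.mpr (by omega)), hm.2.1, ?_⟩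
  intro x hx hxp
  rcases eq_or_ne x q with rfl | hne
  · exact hq
  · have : x < q := by
      rw [Fin.lt_def] at hxp ⊢
      have := Fin.val_ne_of_ne hne
      omega
    exact hm.2.2 x hx this

lemma card_split_LN {q p : Fin n} (hqp : (p : ℕ) = (q : ℕ) + 1)
    (hval : ρ p < ρ q) :
    (univ.filter (fun k => q < k ∧ ρ k < ρ q)).card =
      1 + (univ.filter (fun k => p < k ∧ ρ p < ρ k ∧ ρ k < ρ q)).card
        + (univ.filter (fun k => p < k ∧ ρ k < ρ p)).card := by
  have hset : (univ.filter (fun k => q < k ∧ ρ k < ρ q)) =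
      insert p ((univ.filter (fun k => p < k ∧ ρ p < ρ k ∧ ρ k < ρ q)) ∪
        (univ.filter (fun k => p < k ∧ ρ k < ρ p))) := by
    ext k
    simp only [mem_insert, mem_union, mem_filter, mem_univ, true_and]
    constructor
    · rintro ⟨h1, h2⟩
      rcases eq_or_ne k p with rfl | hne
      · exact Or.inl rfl
      · have hpk : p < k := by
          rw [Fin.lt_def] at h1 ⊢
          have := Fin.val_ne_of_ne hne
          omega
        rcases lt_or_gt_of_ne (fun hv : ρ k = ρ p => hne (ρ.injective hv)) with h | h
        · exact Or.inr (Or.inr ⟨hpk, h⟩)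
        · exact Or.inr (Or.inl ⟨hpk, h, h2⟩)
    · rintro (rfl | ⟨h1, h2, h3⟩ | ⟨h1, h2⟩)
      · exact ⟨Fin.lt_def.mpr (by omega), hval⟩
      · exact ⟨lt_trans (Fin.lt_def.mpr (by omega)) h1, h3⟩
      · exact ⟨lt_trans (Fin.lt_def.mpr (by omega)) h1, lt_trans h2 hval⟩
  have hdisj : Disjoint (univ.filter (fun k => p < k ∧ ρ p < ρ k ∧ ρ k < ρ q))
      (univ.filter (fun k => p < k ∧ ρ k < ρ p)) := by
    rw [disjoint_left]
    intro x hx hy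
    simp only [mem_filter, mem_univ, true_and] at hx hy
    exact absurd hy.2 (not_lt.mpr (le_of_lt hx.2.1))
  have hnm : p ∉ (univ.filter (fun k => p < k ∧ ρ p < ρ k ∧ ρ k < ρ q)) ∪
      (univ.filter (fun k => p < k ∧ ρ k < ρ p)) := by
    simp only [mem_union, mem_filter, mem_univ, true_and]
    rintro (⟨h, -⟩ | ⟨h, -⟩) <;> exact lt_irrefl p h
  rw [hset, card_insert_of_notMem hnm, card_union_of_disjoint hdisj]
  omega

lemma card_split_NN {q p m : Fin n} (hqp : (p : ℕ) = (q : ℕ) + 1)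
    (h1 : ρ q < ρ p) (h2 : ρ p < ρ m) :
    (univ.filter (fun k => q < k ∧ ρ q < ρ k ∧ ρ k < ρ m)).card =
      1 + (univ.filter (fun k => p < k ∧ ρ p < ρ k ∧ ρ k < ρ m)).card
        + (univ.filter (fun k => p < k ∧ ρ q < ρ k ∧ ρ k < ρ p)).card := by
  have hset : (univ.filter (fun k => q < k ∧ ρ q < ρ k ∧ ρ k < ρ m)) =
      insert p ((univ.filter (fun k => p < k ∧ ρ p < ρ k ∧ ρ k < ρ m)) ∪
        (univ.filter (fun k => p < k ∧ ρ q < ρ k ∧ ρ k < ρ p))) := by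
    ext k
    simp only [mem_insert, mem_union, mem_filter, mem_univ, true_and]
    constructor
    · rintro ⟨ha, hb, hc⟩
      rcases eq_or_ne k p with rfl | hne
      · exact Or.inl rfl
      · have hpk : p < k := by
          rw [Fin.lt_def] at ha ⊢
          have := Fin.val_ne_of_ne hne
          omega
        rcases lt_or_gt_of_ne (fun hv : ρ k = ρ p => hne (ρ.injective hv)) with h | h
        · exact Or.inr (Or.inr ⟨hpk, hb, h⟩)
        · exact Or.inr (Or.inl ⟨hpk, h, hc⟩)
    · rintro (rfl | ⟨ha, hb, hc⟩ | ⟨ha, hb, hc⟩)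
      · exact ⟨Fin.lt_def.mpr (by omega), h1, h2⟩
      · exact ⟨lt_trans (Fin.lt_def.mpr (by omega)) ha, lt_trans h1 hb, hc⟩
      · exact ⟨lt_trans (Fin.lt_def.mpr (by omega)) ha, hb, lt_trans hc h2⟩
  have hdisj : Disjoint (univ.filter (fun k => p < k ∧ ρ p < ρ k ∧ ρ k < ρ m))
      (univ.filter (fun k => p < k ∧ ρ q < ρ k ∧ ρ k < ρ p)) := by
    rw [disjoint_left]
    intro x hx hy
    simp only [mem_filter, mem_univ, true_and] at hx hy
    exact absurd hy.2.2 (not_lt.mpr (le_of_lt hx.2.1))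
  have hnm : p ∉ (univ.filter (fun k => p < k ∧ ρ p < ρ k ∧ ρ k < ρ m)) ∪
      (univ.filter (fun k => p < k ∧ ρ q < ρ k ∧ ρ k < ρ p)) := by
    simp only [mem_union, mem_filter, mem_univ, true_and]
    rintro (⟨h, -⟩ | ⟨h, -⟩) <;> exact lt_irrefl p h
  rw [hset, card_insert_of_notMem hnm, card_union_of_disjoint hdisj]
  omega

lemma h_le_succ_lr {q p : Fin n} (hqp : (p : ℕ) = (q : ℕ) + 1)
    (hp : IsLRMax ρ p) : height321 ρ q ≤ height321 ρ p := by
  have hqlt : q < p := Fin.lt_def.mpr (by omega)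
  have hqv : ρ q < ρ p := hp q hqlt
  rw [height_eq_lr ρ hp]
  by_cases hq : IsLRMax ρ q
  · rw [height_eq_lr ρ hq]
    apply card_le_card
    intro k hk
    simp only [mem_filter, mem_univ, true_and] at hk ⊢
    obtain ⟨h1, h2⟩ := hk
    have hne : k ≠ p := fun h => absurd (h ▸ h2) (not_lt.mpr (le_of_lt hqv))
    refine ⟨?_, lt_trans h2 hqv⟩
    rw [Fin.lt_def] at h1 ⊢
    have := Fin.val_ne_of_ne hne
    omega
  · obtain ⟨m, hm⟩ := exists_last ρ hq
    rw [height_eq_nonlr ρ hq hm]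
    apply card_le_card
    intro k hk
    simp only [mem_filter, mem_univ, true_and] at hk ⊢
    obtain ⟨h1, h2, h3⟩ := hk
    have hmp : ρ m < ρ p := hp m (lt_trans hm.1 hqlt)
    have hne : k ≠ p := fun h => absurd (h ▸ h3) (not_lt.mpr (le_of_lt hmp))
    refine ⟨?_, lt_trans h3 hmp⟩
    rw [Fin.lt_def] at h1 ⊢
    have := Fin.val_ne_of_ne hne
    omega

lemma h_le_desc {q p m : Fin n} (hqp : (p : ℕ) = (q : ℕ) + 1)
    (hq : ¬ IsLRMax ρ q) (hp : ¬ IsLRMax ρ p) (hm : IsLastLRMaxBefore ρ m q)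
    (hv : ρ p < ρ q) : height321 ρ q ≤ height321 ρ p := by
  have hm' := last_succ ρ hqp hq hm
  rw [height_eq_nonlr ρ hq hm, height_eq_nonlr ρ hp hm']
  apply card_le_card
  intro k hk
  simp only [mem_filter, mem_univ, true_and] at hk ⊢
  obtain ⟨h1, h2, h3⟩ := hk
  have hne : k ≠ p := fun h => absurd (h ▸ h2) (not_lt.mpr (le_of_lt hv))
  refine ⟨?_, lt_trans hv h2, h3⟩
  rw [Fin.lt_def] at h1 ⊢
  have := Fin.val_ne_of_ne hne
  omega

lemma step_bundle {q p : Fin n} (hqp : (p : ℕ) = (q : ℕ) + 1)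
    (hq : ¬ IsLRMax ρ q)
    (hstep : height321 ρ p + 1 = height321 ρ q) :
    ¬ IsLRMax ρ p ∧ ρ q < ρ p ∧ ∀ k, p < k → ρ q < ρ k → ρ p < ρ k := by
  obtain ⟨m, hm⟩ := exists_last ρ hq
  have hp : ¬ IsLRMax ρ p := by
    intro hp
    have := h_le_succ_lr ρ hqp hp
    omega
  have hm' := last_succ ρ hqp hq hm
  have hnep : ρ q ≠ ρ p := fun h => (by omega : (q:ℕ) ≠ (p:ℕ))
    (by rw [ρ.injective h])
  have hqv : ρ q < ρ p := by
    rcases lt_or_gt_of_ne hnep with h | h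
    · exact h
    · exact absurd (h_le_desc ρ hqp hq hp hm h) (by omega)
  have hpm : ρ p < ρ m := lt_last ρ hm' hp
  have hsplit := card_split_NN ρ hqp hqv hpm
  rw [← height_eq_nonlr ρ hq hm, ← height_eq_nonlr ρ hp hm'] at hsplit
  have hC : (univ.filter (fun k => p < k ∧ ρ q < ρ k ∧ ρ k < ρ p)).card = 0 := by omega
  rw [card_eq_zero] at hC
  refine ⟨hp, hqv, ?_⟩
  intro k hk hqk
  by_contra hcon
  push_neg at hcon
  have hnk : ρ k ≠ ρ p := fun h => (ne_of_lt hk).symm (ρ.injective h)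
  have : k ∈ univ.filter (fun k => p < k ∧ ρ q < ρ k ∧ ρ k < ρ p) :=
    mem_filter.mpr ⟨mem_univ k, hk, hqk, lt_of_le_of_ne hcon hnk⟩
  rw [hC] at this
  exact absurd this (notMem_empty k)

end Helpers

section Main
open Finset

/-- Suppose the path `ψ_(3,2,1)(ρ)` has its *first* jump at position `i`, of depth `d ≥ 1`,
followed immediately by a *maximal* run of `l ≥ 1` consecutive down-steps, and let
`K = {k : k > i, ρ k < ρ (i+1)}`, so that `|K| = d`.  For every left-to-right maximum
`ρ a` weakly to the left of the jump put `H a = #{k > a : ρ k < ρ a}` and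
`s a = #{p : a < p ≤ i, ρ p not a left-to-right maximum}`.  Then the number of
occurrences `(a,b,c)` of the pattern (3,2,1) with `ρ a` a left-to-right maximum weakly
left of the jump, `i < b ≤ i + l` and `c ∈ K` equals
`d · Σ_a max 0 (min (H a - d - s a) l)` (truncated subtraction). -/
theorem first_jump_counts_321_occurrences {n : ℕ} (ρ : Equiv.Perm (Fin n)) (d l : ℕ)
    (hd : 1 ≤ d) (hl : 1 ≤ l) (i : Fin n) (hil : (i : ℕ) + l < n)
    (h : ℕ → ℕ) (hh : ∀ p : Fin n, h (p : ℕ) = height321 ρ p)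
    (hfirst : ∀ q : Fin n, (q : ℕ) < (i : ℕ) → h (q : ℕ) ≤ h ((q : ℕ) + 1) + 1)
    (hjump : h ((i : ℕ) + 1) + 1 + d = h (i : ℕ))
    (hdown : ∀ j, 1 ≤ j → j ≤ l - 1 → h ((i : ℕ) + j + 1) + 1 = h ((i : ℕ) + j))
    (hmaximal : (i : ℕ) + l + 1 = n ∨ h ((i : ℕ) + l + 1) + 1 ≠ h ((i : ℕ) + l))
    (K : Finset (Fin n))
    (hK : K = Finset.univ.filter (fun k =>
      i < k ∧ ρ k < ρ ⟨(i : ℕ) + 1, by omega⟩)) :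
    K.card = d ∧
    (Finset.univ.filter (fun t : Fin n × Fin n × Fin n =>
      t.1 ≤ i ∧ IsLRMax ρ t.1 ∧
      i < t.2.1 ∧ (t.2.1 : ℕ) ≤ (i : ℕ) + l ∧ t.2.2 ∈ K ∧
      t.1 < t.2.1 ∧ t.2.1 < t.2.2 ∧
      ρ t.2.2 < ρ t.2.1 ∧ ρ t.2.1 < ρ t.1)).card =
    d * ∑ a ∈ Finset.univ.filter (fun a : Fin n => a ≤ i ∧ IsLRMax ρ a),
      min ((Finset.univ.filter (fun k => a < k ∧ ρ k < ρ a)).card - d -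
           (Finset.univ.filter (fun p => a < p ∧ p ≤ i ∧ ¬ IsLRMax ρ p)).card) l := by
  classical
  have hn1 : (i : ℕ) + 1 < n := by omega
  set I1 : Fin n := ⟨(i : ℕ) + 1, hn1⟩ with hI1def
  have hiI1 : i < I1 := Fin.lt_def.mpr (by simp [hI1def])
  have hI1val : ((I1 : Fin n) : ℕ) = (i : ℕ) + 1 := rfl
  have hjump' : height321 ρ I1 + 1 + d = height321 ρ i := by
    have e1 : h ((i : ℕ) + 1) = height321 ρ I1 := hh I1
    have e2 : h (i : ℕ) = height321 ρ i := hh i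
    omega
  -- L1 : before the jump, no later entry is below a non-LR-max entry
  have L1 : ∀ N, ∀ p : Fin n, (p : ℕ) = N → (p : ℕ) ≤ (i : ℕ) → ¬ IsLRMax ρ p →
      ∀ k, p < k → ρ p < ρ k := by
    intro N
    induction N using Nat.strong_induction_on with
    | _ N ih =>
      rintro p rfl hpi hp
      obtain ⟨m, hm⟩ := exists_last ρ hp
      have hmp : (m : ℕ) < (p : ℕ) := Fin.lt_def.mp hm.1
      have hC : (univ.filter (fun k => p < k ∧ ρ k < ρ p)).card = 0 := by
        rcases eq_or_lt_of_le (show (m : ℕ) + 1 ≤ (p : ℕ) from hmp) with heq | hlt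
        · -- p = m + 1
          have hvpm : ρ p < ρ m := lt_last ρ hm hp
          have hsplit := card_split_LN ρ heq.symm hvpm
          rw [← height_eq_lr ρ hm.2.1, ← height_eq_nonlr ρ hp hm] at hsplit
          have hno := hfirst m (by omega)
          rw [hh m] at hno
          rw [heq, hh p] at hno
          omega
        · -- q = p - 1 is also a non-LR max
          have hq0 : (p : ℕ) - 1 < n := by omega
          set q : Fin n := ⟨(p : ℕ) - 1, hq0⟩ with hqdef
          have hqval : (q : ℕ) = (p : ℕ) - 1 := rfl
          have hqp : (p : ℕ) = (q : ℕ) + 1 := by omega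
          have hqnl : ¬ IsLRMax ρ q :=
            hm.2.2 q (Fin.lt_def.mpr (by omega)) (Fin.lt_def.mpr (by omega))
          have hmq : IsLastLRMaxBefore ρ m q :=
            ⟨Fin.lt_def.mpr (by omega), hm.2.1,
             fun x hx hxq => hm.2.2 x hx (lt_trans hxq (Fin.lt_def.mpr (by omega)))⟩
          have ihq : ∀ k, q < k → ρ q < ρ k :=
            ih (q : ℕ) (by omega) q rfl (by omega) hqnl
          have hvqp : ρ q < ρ p := ihq p (Fin.lt_def.mpr (by omega))
          have hmp' := last_succ ρ hqp hqnl hmq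
          have hvpm : ρ p < ρ m := lt_last ρ hmp' hp
          have hsplit := card_split_NN ρ hqp hvqp hvpm
          rw [← height_eq_nonlr ρ hqnl hmq, ← height_eq_nonlr ρ hp hmp'] at hsplit
          have hno := hfirst q (by omega)
          rw [hh q] at hno
          rw [show (q : ℕ) + 1 = (p : ℕ) by omega, hh p] at hno
          have hC' : (univ.filter (fun k => p < k ∧ ρ q < ρ k ∧ ρ k < ρ p)).card = 0 := by
            omega
          rw [card_eq_zero] at hC'
          rw [card_eq_zero, eq_empty_iff_forall_notMem]
          intro k hk
          rw [mem_filter] at hk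
          have : k ∈ univ.filter (fun k => p < k ∧ ρ q < ρ k ∧ ρ k < ρ p) :=
            mem_filter.mpr ⟨mem_univ k, hk.2.1, ihq k (lt_trans (Fin.lt_def.mpr (by omega)) hk.2.1), hk.2.2⟩
          rw [hC'] at this
          exact absurd this (notMem_empty k)
      rw [card_eq_zero, eq_empty_iff_forall_notMem] at hC
      intro k hk
      by_contra hcon
      push_neg at hcon
      have hnk : ρ k ≠ ρ p := fun hv => (ne_of_lt hk).symm (ρ.injective hv)
      exact hC k (mem_filter.mpr ⟨mem_univ k, hk, lt_of_le_of_ne hcon hnk⟩)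
  have L1' : ∀ p : Fin n, (p : ℕ) ≤ (i : ℕ) → ¬ IsLRMax ρ p → ∀ k, p < k → ρ p < ρ k :=
    fun p => L1 (p : ℕ) p rfl
  -- I1 is not a LR max
  have hI1nl : ¬ IsLRMax ρ I1 := by
    intro hLR
    have := h_le_succ_lr ρ (show (I1 : ℕ) = (i : ℕ) + 1 from rfl) hLR
    omega
  -- K has d elements
  have hKC : K.card = d := by
    by_cases hiLR : IsLRMax ρ i
    · have hlastI1 : IsLastLRMaxBefore ρ i I1 := by
        refine ⟨hiI1, hiLR, fun x hx hxp => ?_⟩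
        rw [Fin.lt_def] at hx hxp
        have : ((I1 : Fin n) : ℕ) = (i : ℕ) + 1 := rfl
        omega
      have hvI1 : ρ I1 < ρ i := lt_last ρ hlastI1 hI1nl
      have hsplit := card_split_LN ρ (rfl : (I1 : ℕ) = (i : ℕ) + 1) hvI1
      rw [← height_eq_lr ρ hiLR, ← height_eq_nonlr ρ hI1nl hlastI1] at hsplit
      have hCd : (univ.filter (fun k => I1 < k ∧ ρ k < ρ I1)).card = d := by omega
      rw [hK, ← hCd]
      congr 1
      ext k
      simp only [mem_filter, mem_univ, true_and]
      constructor
      · rintro ⟨h1, h2⟩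
        have h2' : ρ k < ρ I1 := h2
        have hne : k ≠ I1 := fun hv => by rw [hv] at h2'; exact lt_irrefl _ h2'
        refine ⟨?_, h2'⟩
        rw [Fin.lt_def] at h1 ⊢
        have := Fin.val_ne_of_ne hne
        have : ((I1 : Fin n) : ℕ) = (i : ℕ) + 1 := rfl
        omega
      · rintro ⟨h1, h2⟩
        exact ⟨lt_trans hiI1 h1, h2⟩
    · obtain ⟨m, hm⟩ := exists_last ρ hiLR
      have ihi : ∀ k, i < k → ρ i < ρ k := L1' i le_rfl hiLR
      have hvqp : ρ i < ρ I1 := ihi I1 hiI1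
      have hmI1 := last_succ ρ (rfl : (I1 : ℕ) = (i : ℕ) + 1) hiLR hm
      have hvpm : ρ I1 < ρ m := lt_last ρ hmI1 hI1nl
      have hsplit := card_split_NN ρ (rfl : (I1 : ℕ) = (i : ℕ) + 1) hvqp hvpm
      rw [← height_eq_nonlr ρ hiLR hm, ← height_eq_nonlr ρ hI1nl hmI1] at hsplit
      have hCd : (univ.filter (fun k => I1 < k ∧ ρ i < ρ k ∧ ρ k < ρ I1)).card = d := by
        omega
      rw [hK, ← hCd]
      congr 1
      ext k
      simp only [mem_filter, mem_univ, true_and]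
      constructor
      · rintro ⟨h1, h2⟩
        have h2' : ρ k < ρ I1 := h2
        have hne : k ≠ I1 := fun hv => by rw [hv] at h2'; exact lt_irrefl _ h2'
        refine ⟨?_, ihi k h1, h2'⟩
        rw [Fin.lt_def] at h1 ⊢
        have := Fin.val_ne_of_ne hne
        have : ((I1 : Fin n) : ℕ) = (i : ℕ) + 1 := rfl
        omega
      · rintro ⟨h1, h2, h3⟩
        exact ⟨lt_trans hiI1 h1, h3⟩
  -- structure of the down-run
  have hrunstep : ∀ j (h1 : 1 ≤ j) (h2 : j + 1 ≤ l),
      ¬ IsLRMax ρ ⟨(i : ℕ) + j + 1, by omega⟩ ∧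
      ρ ⟨(i : ℕ) + j, by omega⟩ < ρ ⟨(i : ℕ) + j + 1, by omega⟩ ∧
      (∀ k, (⟨(i : ℕ) + j + 1, by omega⟩ : Fin n) < k →
        ρ ⟨(i : ℕ) + j, by omega⟩ < ρ k → ρ ⟨(i : ℕ) + j + 1, by omega⟩ < ρ k) := by
    intro j
    induction j using Nat.strong_induction_on with
    | _ j ih =>
      intro h1 h2
      have hqnl : ¬ IsLRMax ρ ⟨(i : ℕ) + j, by omega⟩ := by
        rcases eq_or_lt_of_le h1 with heq | hlt
        · have he : (⟨(i : ℕ) + j, by omega⟩ : Fin n) = I1 := Fin.ext (by simp [hI1def]; omega)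
          rw [he]; exact hI1nl
        · have hprev := (ih (j - 1) (by omega) (by omega) (by omega)).1
          have he : (⟨(i : ℕ) + (j - 1) + 1, by omega⟩ : Fin n)
              = ⟨(i : ℕ) + j, by omega⟩ := Fin.ext (by simp; omega)
          rw [he] at hprev; exact hprev
      have hstep : height321 ρ ⟨(i : ℕ) + j + 1, by omega⟩ + 1
          = height321 ρ ⟨(i : ℕ) + j, by omega⟩ := by
        have hD := hdown j h1 (by omega)
        have e1 : h ((i : ℕ) + j + 1) = height321 ρ ⟨(i : ℕ) + j + 1, by omega⟩ :=
          hh ⟨(i : ℕ) + j + 1, by omega⟩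
        have e2 : h ((i : ℕ) + j) = height321 ρ ⟨(i : ℕ) + j, by omega⟩ :=
          hh ⟨(i : ℕ) + j, by omega⟩
        omega
      exact step_bundle ρ rfl hqnl hstep
  -- monotonicity along the run
  have hmono : ∀ g (x y : Fin n), (i : ℕ) < (x : ℕ) → (y : ℕ) = (x : ℕ) + g →
      (y : ℕ) ≤ (i : ℕ) + l → ρ x ≤ ρ y := by
    intro g
    induction g with
    | zero =>
      intro x y hx hxy _
      have : x = y := Fin.ext (by omega)
      rw [this]
    | succ g ihg =>
      intro x y hx hxy hyl
      have hy0 : (y : ℕ) - 1 < n := by omega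
      have hstep := (hrunstep ((y : ℕ) - 1 - (i : ℕ)) (by omega) (by omega)).2.1
      have e1 : (⟨(i : ℕ) + ((y : ℕ) - 1 - (i : ℕ)), by omega⟩ : Fin n)
          = ⟨(y : ℕ) - 1, hy0⟩ := Fin.ext (by simp; omega)
      have e2 : (⟨(i : ℕ) + ((y : ℕ) - 1 - (i : ℕ)) + 1, by omega⟩ : Fin n) = y :=
        Fin.ext (by simp; omega)
      rw [e1, e2] at hstep
      exact le_trans (ihg x ⟨(y : ℕ) - 1, hy0⟩ hx (by simp; omega) (by simp; omega))
        (le_of_lt hstep)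
  have hlow : ∀ x : Fin n, i < x → (x : ℕ) ≤ (i : ℕ) + l → ρ I1 ≤ ρ x := by
    intro x hx hxl
    exact hmono ((x : ℕ) - (i : ℕ) - 1) I1 x (by simp [hI1def]) (by simp [hI1def]; omega) hxl
  -- entries after the run that exceed ρ I1 exceed the whole run
  have hgap : ∀ g (k : Fin n) (hk : (i : ℕ) + l < (k : ℕ)) (hgl : g + 1 ≤ l),
      ρ I1 < ρ k → ρ (⟨(i : ℕ) + g + 1, by omega⟩ : Fin n) < ρ k := by
    intro g
    induction g with
    | zero =>
      intro k hk hgl hvk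
      have e1 : (⟨(i : ℕ) + 0 + 1, by omega⟩ : Fin n) = I1 := Fin.ext (by simp [hI1def])
      rw [e1]; exact hvk
    | succ g ihg =>
      intro k hk hgl hvk
      have hprev := ihg k hk (by omega) hvk
      have hstep := (hrunstep (g + 1) (by omega) (by omega)).2.2 k
        (Fin.lt_def.mpr (by simp; omega))
      have e1 : (⟨(i : ℕ) + (g + 1), by omega⟩ : Fin n)
          = ⟨(i : ℕ) + g + 1, by omega⟩ := Fin.ext (by simp; omega)
      rw [e1] at hstep
      exact hstep hprev
  -- all elements of K lie beyond the run
  have hKpos : ∀ k ∈ K, (i : ℕ) + l < (k : ℕ) := by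
    intro k hk
    rw [hK, mem_filter] at hk
    have hvk : ρ k < ρ I1 := hk.2.2
    by_contra hcon
    push_neg at hcon
    exact absurd (hlow k hk.2.1 hcon) (not_le.mpr hvk)
  -- the run interval has exactly l positions
  have hEcard : (univ.filter (fun k : Fin n => i < k ∧ (k : ℕ) ≤ (i : ℕ) + l)).card = l := by
    have he : (univ.filter (fun k : Fin n => i < k ∧ (k : ℕ) ≤ (i : ℕ) + l))
        = Finset.Ioc i ⟨(i : ℕ) + l, by omega⟩ := by
      ext k
      simp only [mem_filter, mem_univ, true_and, mem_Ioc]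
      constructor
      · rintro ⟨h1, h2⟩
        exact ⟨h1, Fin.le_def.mpr (by simpa using h2)⟩
      · rintro ⟨h1, h2⟩
        have := Fin.le_def.mp h2
        simp only [Fin.val_mk] at this
        exact ⟨h1, this⟩
    rw [he, Fin.card_Ioc]
    simp
  -- the key count for each left-to-right maximum a ≤ i
  have perA : ∀ a : Fin n, a ≤ i → IsLRMax ρ a →
      (univ.filter (fun b : Fin n => i < b ∧ (b : ℕ) ≤ (i : ℕ) + l ∧ ρ b < ρ a)).card =
      min ((univ.filter (fun k => a < k ∧ ρ k < ρ a)).card - d -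
           (univ.filter (fun p => a < p ∧ p ≤ i ∧ ¬ IsLRMax ρ p)).card) l := by
    intro a hai haLR
    have haiN : (a : ℕ) ≤ (i : ℕ) := Fin.le_def.mp hai
    set Ha := univ.filter (fun k => a < k ∧ ρ k < ρ a) with hHa
    set Sa := univ.filter (fun p => a < p ∧ p ≤ i ∧ ¬ IsLRMax ρ p) with hSa
    set Ca := univ.filter (fun b : Fin n => i < b ∧ (b : ℕ) ≤ (i : ℕ) + l ∧ ρ b < ρ a)
      with hCa
    have hCl : Ca.card ≤ l := by
      rw [← hEcard]
      apply card_le_card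
      intro x hx
      rw [hCa, mem_filter] at hx
      rw [mem_filter]
      exact ⟨hx.1, hx.2.1, hx.2.2.1⟩
    have hSadisjK : Disjoint Sa K := by
      rw [disjoint_left]
      intro x hx hxK
      rw [hSa, mem_filter] at hx
      have h1 := Fin.le_def.mp hx.2.2.1
      have h2 := hKpos x hxK
      omega
    have hvne : ρ a ≠ ρ I1 := by
      intro hv
      have := ρ.injective hv
      rw [this] at haiN
      omega
    rcases lt_or_gt_of_ne hvne with hva | hva
    · -- ρ a < ρ I1 : no valid b, and H a ≤ d + s a
      have hCe : Ca = ∅ := by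
        rw [eq_empty_iff_forall_notMem]
        intro b hb
        rw [hCa, mem_filter] at hb
        have : ρ I1 ≤ ρ b := hlow b hb.2.1 hb.2.2.1
        exact absurd hb.2.2.2 (not_lt.mpr (le_trans (le_of_lt hva) this))
      have hHle : Ha.card ≤ Sa.card + K.card := by
        rw [← card_union_of_disjoint hSadisjK]
        apply card_le_card
        intro k hk
        rw [hHa, mem_filter] at hk
        rw [mem_union]
        rcases le_or_gt (k : ℕ) (i : ℕ) with hki | hki
        · left
          rw [hSa, mem_filter]
          refine ⟨mem_univ k, hk.2.1, Fin.le_def.mpr hki, ?_⟩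
          intro hLR
          exact absurd (hLR a hk.2.1) (not_lt.mpr (le_of_lt hk.2.2))
        · right
          rw [hK, mem_filter]
          exact ⟨mem_univ k, Fin.lt_def.mpr hki, lt_trans hk.2.2 hva⟩
      rw [hCe]
      simp only [card_empty]
      omega
    · -- ρ I1 < ρ a
      have hSsub : Sa ⊆ Ha := by
        intro p hp
        rw [hSa, mem_filter] at hp
        rw [hHa, mem_filter]
        refine ⟨mem_univ p, hp.2.1, ?_⟩
        have hpI1 : p < I1 := Fin.lt_def.mpr (by have := Fin.le_def.mp hp.2.2.1; omega)
        exact lt_trans (L1' p (Fin.le_def.mp hp.2.2.1) hp.2.2.2 I1 hpI1) hva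
      have hCsub : Ca ⊆ Ha := by
        intro b hb
        rw [hCa, mem_filter] at hb
        rw [hHa, mem_filter]
        exact ⟨mem_univ b, Fin.lt_def.mpr (by have := Fin.lt_def.mp hb.2.1; omega),
          hb.2.2.2⟩
      have hKsub : K ⊆ Ha := by
        intro k hk
        have hkpos := hKpos k hk
        rw [hK, mem_filter] at hk
        rw [hHa, mem_filter]
        exact ⟨mem_univ k, Fin.lt_def.mpr (by omega), lt_trans hk.2.2 hva⟩
      have hdisj1 : Disjoint Sa Ca := by
        rw [disjoint_left]
        intro x hx hy
        rw [hSa, mem_filter] at hx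
        rw [hCa, mem_filter] at hy
        have h1 := Fin.le_def.mp hx.2.2.1
        have h2 := Fin.lt_def.mp hy.2.1
        omega
      have hdisj2 : Disjoint (Sa ∪ Ca) K := by
        rw [disjoint_left]
        intro x hx hxK
        have h2 := hKpos x hxK
        rw [mem_union] at hx
        rcases hx with hx | hx
        · rw [hSa, mem_filter] at hx
          have := Fin.le_def.mp hx.2.2.1
          omega
        · rw [hCa, mem_filter] at hx
          have := hx.2.2.1
          omega
      have hlower : Sa.card + Ca.card + K.card ≤ Ha.card := by
        rw [← card_union_of_disjoint hdisj1, ← card_union_of_disjoint hdisj2]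
        exact card_le_card (union_subset (union_subset hSsub hCsub) hKsub)
      have hupper : Ca.card < l → Ha.card ≤ Sa.card + Ca.card + K.card := by
        intro hclt
        -- some run entry exceeds ρ a
        have hCsubE : Ca ⊆ univ.filter (fun k : Fin n => i < k ∧ (k : ℕ) ≤ (i : ℕ) + l) := by
          intro x hx
          rw [hCa, mem_filter] at hx
          rw [mem_filter]
          exact ⟨hx.1, hx.2.1, hx.2.2.1⟩
        have hne : (univ.filter (fun k : Fin n => i < k ∧ (k : ℕ) ≤ (i : ℕ) + l) \ Ca).Nonempty := by
          rw [← card_pos, card_sdiff_of_subset hCsubE, hEcard]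
          omega
        obtain ⟨b0, hb0⟩ := hne
        rw [mem_sdiff, mem_filter] at hb0
        obtain ⟨⟨-, hb01, hb02⟩, hb0n⟩ := hb0
        have hb0a : ρ a < ρ b0 := by
          have hne2 : ρ b0 ≠ ρ a := by
            intro hv
            have := ρ.injective hv
            rw [this] at hb01
            exact absurd (Fin.lt_def.mp hb01) (by omega)
          rcases lt_or_gt_of_ne hne2 with hlt | hgt
          · exact absurd (by rw [hCa]; exact mem_filter.mpr ⟨mem_univ b0, hb01, hb02, hlt⟩) hb0n
          · exact hgt
        have hnl : (i : ℕ) + l < n := hil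
        have hb0top : ρ b0 ≤ ρ (⟨(i : ℕ) + l, hnl⟩ : Fin n) :=
          hmono ((i : ℕ) + l - (b0 : ℕ)) b0 ⟨(i : ℕ) + l, hnl⟩
            (Fin.lt_def.mp hb01) (by simp; omega) (by simp)
        rw [← card_union_of_disjoint hdisj1, ← card_union_of_disjoint hdisj2]
        apply card_le_card
        intro k hk
        rw [hHa, mem_filter] at hk
        rw [mem_union, mem_union]
        rcases le_or_gt (k : ℕ) (i : ℕ) with hki | hki
        · left; left
          rw [hSa, mem_filter]
          refine ⟨mem_univ k, hk.2.1, Fin.le_def.mpr hki, ?_⟩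
          intro hLR
          exact absurd (hLR a hk.2.1) (not_lt.mpr (le_of_lt hk.2.2))
        · rcases le_or_gt (k : ℕ) ((i : ℕ) + l) with hkl | hkl
          · left; right
            rw [hCa, mem_filter]
            exact ⟨mem_univ k, Fin.lt_def.mpr hki, hkl, hk.2.2⟩
          · right
            rw [hK, mem_filter]
            refine ⟨mem_univ k, Fin.lt_def.mpr (by omega), ?_⟩
            show ρ k < ρ I1
            by_contra hcon
            push_neg at hcon
            have hkI1 : ρ I1 < ρ k := by
              rcases eq_or_lt_of_le hcon with heq | hlt2
              · exfalso
                have hv := ρ.injective heq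
                rw [← hv] at hkl
                omega
              · exact hlt2
            have := hgap (l - 1) k hkl (by omega) hkI1
            have he2 : (⟨(i : ℕ) + (l - 1) + 1, by omega⟩ : Fin n)
                = ⟨(i : ℕ) + l, hnl⟩ := Fin.ext (by simp; omega)
            rw [he2] at this
            exact absurd hk.2.2 (not_lt.mpr (le_of_lt (lt_trans hb0a (lt_of_le_of_lt hb0top this))))
      rcases eq_or_lt_of_le hCl with heq | hlt
      · omega
      · have := hupper hlt
        omega
  refine ⟨hKC, ?_⟩
  set A := univ.filter (fun a : Fin n => a ≤ i ∧ IsLRMax ρ a) with hA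
  set R := (univ ×ˢ univ).filter (fun ab : Fin n × Fin n =>
    ab.1 ≤ i ∧ IsLRMax ρ ab.1 ∧ i < ab.2 ∧ (ab.2 : ℕ) ≤ (i : ℕ) + l ∧ ρ ab.2 < ρ ab.1)
    with hR
  -- the triple count factorises as pairs × K
  have hTcard : (Finset.univ.filter (fun t : Fin n × Fin n × Fin n =>
      t.1 ≤ i ∧ IsLRMax ρ t.1 ∧
      i < t.2.1 ∧ (t.2.1 : ℕ) ≤ (i : ℕ) + l ∧ t.2.2 ∈ K ∧
      t.1 < t.2.1 ∧ t.2.1 < t.2.2 ∧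
      ρ t.2.2 < ρ t.2.1 ∧ ρ t.2.1 < ρ t.1)).card = R.card * K.card := by
    rw [← card_product]
    apply card_nbij' (fun t => ((t.1, t.2.1), t.2.2)) (fun x => (x.1.1, x.1.2, x.2))
    · intro t ht
      rw [mem_coe, mem_filter] at ht
      obtain ⟨-, h1, h2, h3, h4, h5, -, -, -, h9⟩ := ht
      rw [mem_coe, mem_product, hR, mem_filter]
      exact ⟨⟨mem_product.mpr ⟨mem_univ _, mem_univ _⟩, h1, h2, h3, h4, h9⟩, h5⟩
    · intro x hx
      rw [mem_coe, mem_product, hR, mem_filter] at hx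
      obtain ⟨⟨-, h1, h2, h3, h4, h5⟩, hxK⟩ := hx
      rw [mem_coe, mem_filter]
      have hxpos := hKpos x.2 hxK
      have hbc : x.1.2 < x.2 := Fin.lt_def.mpr (by omega)
      have hab : x.1.1 < x.1.2 :=
        Fin.lt_def.mpr (by have := Fin.le_def.mp h1; have := Fin.lt_def.mp h3; omega)
      have hvcb : ρ x.2 < ρ x.1.2 := by
        have h6 : ρ x.2 < ρ I1 := by
          rw [hK, mem_filter] at hxK
          exact hxK.2.2
        exact lt_of_lt_of_le h6 (hlow x.1.2 h3 h4)
      exact ⟨mem_univ _, h1, h2, h3, h4, hxK, hab, hbc, hvcb, h5⟩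
    · intro t _
      rfl
    · intro x _
      rfl
  rw [hTcard, hKC]
  -- count pairs fiberwise over the first coordinate
  have hfib : R.card = ∑ a ∈ A, (univ.filter
      (fun b : Fin n => i < b ∧ (b : ℕ) ≤ (i : ℕ) + l ∧ ρ b < ρ a)).card := by
    rw [card_eq_sum_card_fiberwise (f := Prod.fst) (t := A) (by
      intro x hx
      simp only [mem_coe, hR, mem_filter] at hx
      rw [mem_coe, hA, mem_filter]
      exact ⟨mem_univ _, hx.2.1, hx.2.2.1⟩)]
    apply sum_congr rfl
    intro a haA
    rw [hA, mem_filter] at haA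
    apply card_nbij' (fun x => x.2) (fun b => (a, b))
    · intro x hx
      rw [mem_coe, mem_filter, hR, mem_filter] at hx
      obtain ⟨⟨-, -, -, h3, h4, h5⟩, hfst⟩ := hx
      rw [mem_coe, mem_filter]
      rw [← hfst]
      exact ⟨mem_univ _, h3, h4, h5⟩
    · intro b hb
      rw [mem_coe, mem_filter] at hb
      rw [mem_coe, mem_filter, hR, mem_filter]
      exact ⟨⟨mem_product.mpr ⟨mem_univ _, mem_univ _⟩, haA.2.1, haA.2.2, hb.2⟩, rfl⟩
    · intro x hx
      rw [mem_coe, mem_filter] at hx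
      have : x.1 = a := hx.2
      rw [← this]
    · intro b _
      rfl
  rw [hfib]
  rw [mul_comm]
  congr 1
  apply sum_congr rfl
  intro a haA
  rw [hA, mem_filter] at haA
  exact perA a haA.2.1 haA.2.2

end Main
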